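/- Let p be an odd prime. If σ, γ, φ : 𝔽_p → ℤ satisfy σ(x) + γ(x+a) + φ(x+2a) = 0 for every x ∈ 𝔽_p and every a ∈ {0,1,2} ⊆ 𝔽_p, then σ, γ and φ are each constant functions. Equivalently, the distribution μ_AP admits no non-trivial Abelian embedding into (ℤ,+). -/

import Mathlib

/-- If `f` is invariant under translation by a unit `s` of `ZMod p`, it is constant. -/
lemma step_const {p : ℕ} (hp : p.Prime) (s : ZMod p) (hs : s ≠ 0) (f : ZMod p → ℤ)
    (hf : ∀ x, f (x + s) = f x) : ∀ x y, f x = f y := by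
  haveI : Fact p.Prime := ⟨hp⟩
  have key : ∀ (n : ℕ) (x : ZMod p), f (x + n * s) = f x := by
    intro n
    induction n with
    | zero => intro x; simp
    | succ n ih =>
      intro x
      have : x + ((n : ZMod p) + 1) * s = (x + n * s) + s := by ring
      push_cast
      rw [this, hf, ih]
  intro x y
  have hy : y = x + (((y - x) * s⁻¹).val : ZMod p) * s := by
    rw [ZMod.natCast_val, ZMod.cast_id]
    field_simp
    ring
  rw [hy, key]

theorem muAP_no_nontrivial_Z_embedding (p : ℕ) (hp : p.Prime) (hodd : Odd p)
    (σ γ φ : ZMod p → ℤ)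
    (h : ∀ x a : ZMod p, (a = 0 ∨ a = 1 ∨ a = 2) →
      σ x + γ (x + a) + φ (x + 2 * a) = 0) :
    (∀ x y, σ x = σ y) ∧ (∀ x y, γ x = γ y) ∧ (∀ x y, φ x = φ y) := by
  haveI : Fact p.Prime := ⟨hp⟩
  have hp2 : p ≠ 2 := by rintro rfl; exact absurd (Nat.odd_iff.mp hodd) (by norm_num)
  have h1ne : (1 : ZMod p) ≠ 0 := one_ne_zero
  have h2ne : (2 : ZMod p) ≠ 0 := by
    have : ((2 : ℕ) : ZMod p) ≠ 0 := by
      rw [Ne, ZMod.natCast_eq_zero_iff]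
      intro hdvd
      exact hp2 ((Nat.prime_dvd_prime_iff_eq hp Nat.prime_two).mp hdvd)
    simpa using this
  have h0 : ∀ x, σ x + γ x + φ x = 0 := fun x => by simpa using h x 0 (Or.inl rfl)
  have hA : ∀ x, σ x + γ (x + 1) + φ (x + 2) = 0 := fun x => by
    simpa using h x 1 (Or.inr (Or.inl rfl))
  have hB : ∀ x, σ x + γ (x + 2) + φ (x + 4) = 0 := fun x => by
    have := h x 2 (Or.inr (Or.inr rfl))
    have h24 : (2 : ZMod p) * 2 = 4 := by norm_num
    rwa [h24] at this
  -- relation A: γ(x+1) + φ(x+2) = γ x + φ x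
  have relA : ∀ x : ZMod p, γ (x + 1) + φ (x + 2) = γ x + φ x := fun x => by
    have := h0 x; have := hA x; omega
  -- relation B: γ(x+2) + φ(x+4) = γ(x+1) + φ(x+2)
  have relB : ∀ x : ZMod p, γ (x + 2) + φ (x + 4) = γ (x + 1) + φ (x + 2) := fun x => by
    have := hA x; have := hB x; omega
  -- e(x) := φ(x+1) - φ(x) satisfies e(x+2) = e(x)
  set e : ZMod p → ℤ := fun x => φ (x + 1) - φ x with he
  have he2 : ∀ x, e (x + 2) = e x := by
    intro x
    have hB' := relB (x - 1)
    have hA' := relA x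
    have e1 : x - 1 + 2 = x + 1 := by ring
    have e2 : x - 1 + 4 = x + 3 := by ring
    have e3 : x - 1 + 1 = x := by ring
    rw [e1, e2, e3] at hB'
    -- relB (x-1): γ(x+1) + φ(x+3) = γ(x) + φ(x+1)
    -- relA x: γ(x+1) + φ(x+2) = γ x + φ x
    have e4 : x + 2 + 1 = x + 3 := by ring
    simp only [he, e4]
    omega
  have econst : ∀ x y, e x = e y := step_const hp 2 h2ne e (fun x => he2 x)
  -- summing e over ZMod p gives 0, hence e ≡ 0
  have hsum : ∑ x : ZMod p, e x = 0 := by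
    have : ∑ x : ZMod p, φ (x + 1) = ∑ x : ZMod p, φ x :=
      Fintype.sum_equiv (Equiv.addRight (1 : ZMod p)) _ _ (fun x => rfl)
    simp only [he, Finset.sum_sub_distrib, this, sub_self]
  have hcard : (Fintype.card (ZMod p) : ℤ) = p := by rw [ZMod.card]
  have hezero : ∀ x, e x = 0 := by
    intro x
    have : ∑ y : ZMod p, e y = ∑ _y : ZMod p, e x :=
      Finset.sum_congr rfl (fun y _ => econst y x)
    rw [Finset.sum_const, Finset.card_univ] at this
    rw [this] at hsum
    have hppos : (0 : ℤ) < p := by exact_mod_cast hp.pos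
    have : (p : ℤ) * e x = 0 := by
      rw [← hcard]; simpa [nsmul_eq_mul] using hsum
    exact (mul_eq_zero.mp this).elim (fun h' => absurd h' (by positivity)) id
  -- φ is constant
  have hφstep : ∀ x, φ (x + 1) = φ x := fun x => by have := hezero x; simp [he] at this; omega
  have hφ : ∀ x y, φ x = φ y := step_const hp 1 h1ne φ hφstep
  -- γ is constant
  have hγstep : ∀ x, γ (x + 1) = γ x := fun x => by
    have := relA x
    have h1 := hφ (x + 2) x
    omega
  have hγ : ∀ x y, γ x = γ y := step_const hp 1 h1ne γ hγstep
  -- σ is constant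
  have hσ : ∀ x y, σ x = σ y := fun x y => by
    have := h0 x; have := h0 y; have := hγ x y; have := hφ x y; omega
  exact ⟨hσ, hγ, hφ⟩
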